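/- Under the setup of the one-step Anderson acceleration lemma (A = WΛW* real symmetric with eigenvalues in [a,b] not containing 0 or 1; x_{j+1} = A·x_j + b for j < k; x_{k+1} from one step of AA with memory m in the ℓ² norm), the following bound holds: ‖D_μ⁻¹·W*·e_{k+1}‖₂ ≤ C(a,b,m)·‖D_μ⁻¹·W*·A·e_k‖₂, where D_μ = Λ(Λ − I)⁻¹ and C(a,b,m) = |T_m((2ab − a − b)/(b − a))|⁻¹ with T_m the degree-m Chebyshev polynomial of the first kind. -/

import Mathlib

open Matrix

/-- Euclidean norm of a vector. -/
noncomputable def enorm2 {n : ℕ} (v : Fin n → ℝ) : ℝ :=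
  Real.sqrt (∑ i, v i ^ 2)

open Polynomial


lemma cheb_ge_one {t : ℝ} (ht : 1 ≤ t) (p : ℕ) :
    1 ≤ (Chebyshev.T ℝ p).eval t ∧
      (Chebyshev.T ℝ p).eval t ≤ (Chebyshev.T ℝ (p + 1)).eval t := by
  induction p with
  | zero => simp [ht]
  | succ q ih =>
    have h2 : (Chebyshev.T ℝ ((q : ℤ) + 2)).eval t
        = 2 * t * (Chebyshev.T ℝ ((q : ℤ) + 1)).eval t - (Chebyshev.T ℝ (q : ℤ)).eval t := by
      rw [Chebyshev.T_add_two]; simp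
    have hc : ((q + 1 : ℕ) : ℤ) + 1 = (q : ℤ) + 2 := by push_cast; ring
    have hc2 : ((q + 1 : ℕ) : ℤ) = (q : ℤ) + 1 := by push_cast; ring
    rw [hc, hc2]
    obtain ⟨i1, i2⟩ := ih
    constructor
    · linarith
    · rw [h2]; nlinarith

lemma cheb_le_neg_one {t : ℝ} (ht : t ≤ -1) (p : ℕ) :
    1 ≤ (-1 : ℝ) ^ p * (Chebyshev.T ℝ p).eval t ∧
      (-1 : ℝ) ^ p * (Chebyshev.T ℝ p).eval t
        ≤ (-1 : ℝ) ^ (p + 1) * (Chebyshev.T ℝ (p + 1)).eval t := by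
  induction p with
  | zero => simp; linarith
  | succ q ih =>
    have h2 : (Chebyshev.T ℝ ((q : ℤ) + 2)).eval t
        = 2 * t * (Chebyshev.T ℝ ((q : ℤ) + 1)).eval t - (Chebyshev.T ℝ (q : ℤ)).eval t := by
      rw [Chebyshev.T_add_two]; simp
    have hc : ((q + 1 : ℕ) : ℤ) + 1 = (q : ℤ) + 2 := by push_cast; ring
    have hc2 : ((q + 1 : ℕ) : ℤ) = (q : ℤ) + 1 := by push_cast; ring
    rw [hc, hc2]
    obtain ⟨i1, i2⟩ := ih
    constructor
    · linarith
    · rw [h2, pow_succ, pow_succ]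
      ring_nf
      ring_nf at i1 i2
      nlinarith

lemma cheb_big {t : ℝ} (ht : 1 ≤ |t|) (p : ℕ) : 1 ≤ |(Chebyshev.T ℝ p).eval t| := by
  rcases abs_le.mp (le_refl |t|) with _
  rcases le_or_gt 1 t with h | h
  · calc (1:ℝ) ≤ (Chebyshev.T ℝ p).eval t := (cheb_ge_one h p).1
      _ ≤ _ := le_abs_self _
  · have ht' : t ≤ -1 := by
      rcases abs_cases t with ⟨h1, _⟩ | ⟨h1, _⟩ <;> linarith
    calc (1:ℝ) ≤ (-1:ℝ)^p * (Chebyshev.T ℝ p).eval t := (cheb_le_neg_one ht' p).1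
      _ ≤ |(-1:ℝ)^p * (Chebyshev.T ℝ p).eval t| := le_abs_self _
      _ = |(Chebyshev.T ℝ p).eval t| := by rw [abs_mul, abs_pow, abs_neg, abs_one, one_pow, one_mul]

lemma cheb_small {s : ℝ} (h1 : -1 ≤ s) (h2 : s ≤ 1) (p : ℕ) :
    |(Chebyshev.T ℝ p).eval s| ≤ 1 := by
  have : s = Real.cos (Real.arccos s) := (Real.cos_arccos h1 h2).symm
  rw [this, Chebyshev.T_real_cos]
  exact Real.abs_cos_le_one _

noncomputable def Qh (α β : ℝ) : ℕ → Polynomial ℝ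
  | 0 => 1
  | 1 => C α + C β * X
  | (p+2) => 2 * (C α + C β * X) * Qh α β (p+1) - X^2 * Qh α β p

lemma Qh_natDegree (α β : ℝ) : ∀ p, (Qh α β p).natDegree ≤ p := by
  intro p
  induction p using Nat.twoStepInduction with
  | zero => simp [Qh]
  | one => show (C α + C β * X).natDegree ≤ 1; compute_degree
  | more q ih1 ih2 =>
    show (2 * (C α + C β * X) * Qh α β (q+1) - X^2 * Qh α β q).natDegree ≤ q + 2
    apply le_trans (natDegree_sub_le _ _)
    have h1 : (2 * (C α + C β * X)).natDegree ≤ 1 := by compute_degree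
    have h2 := natDegree_mul_le (p := 2 * (C α + C β * X)) (q := Qh α β (q+1))
    have h3 := natDegree_mul_le (p := (X:ℝ[X])^2) (q := Qh α β q)
    have h4 : ((X:ℝ[X])^2).natDegree = 2 := natDegree_X_pow 2
    simp only [max_le_iff]
    omega

lemma Qh_eval (α β : ℝ) {t : ℝ} (ht : t ≠ 0) :
    ∀ p : ℕ, (Qh α β p).eval t = t ^ p * (Chebyshev.T ℝ p).eval ((α + β * t) / t) := by
  intro p
  set s := (α + β * t) / t with hs
  have hts : t * s = α + β * t := by rw [hs]; field_simp
  induction p using Nat.twoStepInduction with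
  | zero =>
    show (1:ℝ[X]).eval t = _
    rw [show ((0:ℕ):ℤ) = 0 from rfl, Chebyshev.T_zero]
    simp
  | one =>
    show (C α + C β * X).eval t = _
    rw [show ((1:ℕ):ℤ) = 1 from rfl, Chebyshev.T_one]
    simp [← hts]
  | more q ih1 ih2 =>
    show (2 * (C α + C β * X) * Qh α β (q+1) - X^2 * Qh α β q).eval t = _
    have hc : ((q + 2 : ℕ) : ℤ) = (q : ℤ) + 2 := by push_cast; ring
    have hT : (Chebyshev.T ℝ ((q:ℤ) + 2)).eval s
        = 2 * s * (Chebyshev.T ℝ ((q:ℤ) + 1)).eval s - (Chebyshev.T ℝ (q:ℤ)).eval s := by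
      rw [Chebyshev.T_add_two]; simp
    have hc2 : ((q + 1 : ℕ) : ℤ) = (q : ℤ) + 1 := by push_cast; ring
    rw [hc, hT]
    simp only [eval_sub, eval_mul, eval_add, eval_C, eval_X, eval_pow, eval_ofNat, ih1, ih2, hc2]
    rw [← hts]
    ring

lemma exists_coeffs {m : ℕ} (hm : 0 < m) (P : ℝ[X]) (hdeg : P.natDegree ≤ m)
    (h1 : P.eval 1 = 1) :
    ∃ c : Fin m → ℝ, ∀ t : ℝ,
      t ^ m - ∑ l : Fin m, c l * (t ^ ((l : ℕ) + 1) - t ^ (l : ℕ)) = P.eval t := by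
  have hroot : (P - X ^ m).IsRoot 1 := by simp [IsRoot, h1]
  obtain ⟨r, hr⟩ := dvd_iff_isRoot.mpr hroot
  have hrdeg : r.natDegree < m := by
    by_cases h : r = 0
    · simpa [h] using hm
    · have h2 : (X - C (1 : ℝ)) ≠ 0 := X_sub_C_ne_zero 1
      have h3 := natDegree_mul h2 h
      rw [← hr] at h3
      have hd2 : (P - X ^ m).natDegree ≤ m :=
        le_trans (natDegree_sub_le _ _) (by simp [hdeg])
      have h4 : (X - C (1 : ℝ)).natDegree = 1 := natDegree_X_sub_C 1
      omega
  refine ⟨fun l => -(r.coeff l), fun t => ?_⟩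
  have hev : r.eval t = ∑ l ∈ Finset.range m, r.coeff l * t ^ l := eval_eq_sum_range' hrdeg t
  have h3 : P.eval t - t ^ m = (t - 1) * r.eval t := by
    have := congrArg (eval t) hr
    simpa using this
  have h4 : ∑ l : Fin m, (-(r.coeff l)) * (t ^ ((l : ℕ) + 1) - t ^ (l : ℕ))
      = -((t - 1) * r.eval t) := by
    rw [hev, Finset.mul_sum, ← Finset.sum_neg_distrib,
      ← Fin.sum_univ_eq_sum_range (fun l => -((t - 1) * (r.coeff l * t ^ l))) m]
    apply Finset.sum_congr rfl
    intro l _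
    ring
  rw [h4]
  linarith


lemma cheb_key {m : ℕ} (hm : 0 < m) {a b : ℝ} (hab : a < b)
    (h0 : 0 < a ∨ b < 0) (h1 : 1 < a ∨ b < 1) :
    ∃ c : Fin m → ℝ, ∀ d : ℝ, d ∈ Set.Icc a b →
      |d ^ m - ∑ l : Fin m, c l * (d ^ ((l : ℕ) + 1) - d ^ (l : ℕ))|
        ≤ |(Chebyshev.T ℝ m).eval ((2 * a * b - a - b) / (b - a))|⁻¹ * |d ^ m| := by
  have hba : (0 : ℝ) < b - a := by linarith
  set t0 : ℝ := (2 * a * b - a - b) / (b - a) with ht0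
  have hT0 : 1 ≤ |t0| := by
    rcases h1 with h1 | h1
    · refine le_abs.mpr (Or.inl ?_)
      rw [ht0, le_div_iff₀ hba]
      nlinarith
    · rcases h0 with h0 | h0
      · refine le_abs.mpr (Or.inr ?_)
        rw [ht0, ← neg_div, le_div_iff₀ hba]
        nlinarith
      · refine le_abs.mpr (Or.inl ?_)
        rw [ht0, le_div_iff₀ hba]
        nlinarith
  set T0 : ℝ := (Chebyshev.T ℝ m).eval t0 with hT0def
  have hT1 : 1 ≤ |T0| := cheb_big hT0 m
  have hT0ne : T0 ≠ 0 := by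
    intro h; rw [h] at hT1; simp at hT1; linarith
  set α : ℝ := 2 * a * b / (b - a) with hα
  set β : ℝ := -(a + b) / (b - a) with hβ
  have hαβ : α + β * 1 = t0 := by rw [hα, hβ, ht0]; ring
  set P : ℝ[X] := C T0⁻¹ * Qh α β m with hP
  have hdeg : P.natDegree ≤ m := by
    refine le_trans (natDegree_mul_le) ?_
    simpa using Qh_natDegree α β m
  have heval1 : P.eval 1 = 1 := by
    rw [hP, eval_mul, eval_C, Qh_eval α β one_ne_zero m]
    rw [div_one, hαβ, ← hT0def]
    simp [inv_mul_cancel₀ hT0ne]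
  obtain ⟨c, hc⟩ := exists_coeffs hm P hdeg heval1
  refine ⟨c, fun d hd => ?_⟩
  obtain ⟨hda, hdb⟩ := hd
  have hdne : d ≠ 0 := by
    rcases h0 with h0 | h0
    · exact ne_of_gt (lt_of_lt_of_le h0 hda)
    · exact ne_of_lt (lt_of_le_of_lt hdb h0)
  set s : ℝ := (α + β * d) / d with hs
  have hsd : s * ((b - a) * d) = 2 * a * b - (a + b) * d := by
    rw [hs, hα, hβ]; field_simp; ring
  have hs1 : -1 ≤ s ∧ s ≤ 1 := by
    rcases h0 with h0 | h0
    · have hd0 : 0 < d := lt_of_lt_of_le h0 hda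
      have hpos : 0 < (b - a) * d := mul_pos hba hd0
      constructor
      · nlinarith [mul_nonneg h0.le (sub_nonneg.mpr hdb)]
      · nlinarith [mul_nonneg (by linarith : (0:ℝ) ≤ b) (sub_nonneg.mpr hda)]
    · have hd0 : d < 0 := lt_of_le_of_lt hdb h0
      have hneg : (b - a) * d < 0 := mul_neg_of_pos_of_neg hba hd0
      constructor
      · nlinarith [mul_nonpos_of_nonpos_of_nonneg (by linarith : a ≤ 0) (sub_nonneg.mpr hdb)]
      · nlinarith [mul_nonneg (neg_nonneg.mpr h0.le) (sub_nonneg.mpr hda)]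
  have hPd : P.eval d = T0⁻¹ * (d ^ m * (Chebyshev.T ℝ m).eval s) := by
    rw [hP, eval_mul, eval_C, Qh_eval α β hdne m, hs]
  rw [hc d, hPd]
  rw [abs_mul, abs_mul, abs_inv]
  calc |T0|⁻¹ * (|d ^ m| * |(Chebyshev.T ℝ m).eval s|)
      ≤ |T0|⁻¹ * (|d ^ m| * 1) := by
        apply mul_le_mul_of_nonneg_left
        · exact mul_le_mul_of_nonneg_left (cheb_small hs1.1 hs1.2 m) (abs_nonneg _)
        · positivity
    _ = |T0|⁻¹ * |d ^ m| := by ring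

/-- One-step Anderson acceleration error bound:
`‖D_μ⁻¹ Wᵀ e_{k+1}‖₂ ≤ C(a,b,m) ‖D_μ⁻¹ Wᵀ A e_k‖₂` with
`C(a,b,m) = |T_m((2ab - a - b)/(b - a))|⁻¹`. -/
theorem stmt4 {n m k : ℕ} (hm : 0 < m) (hmk : m ≤ k) (a b : ℝ) (hab : a < b)
    (h0 : (0 : ℝ) ∉ Set.Icc a b) (h1 : (1 : ℝ) ∉ Set.Icc a b)
    (W Λ A : Matrix (Fin n) (Fin n) ℝ) (d : Fin n → ℝ)
    (hΛ : Λ = Matrix.diagonal d)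
    (hW1 : Wᵀ * W = 1) (hW2 : W * Wᵀ = 1)
    (hA : A = W * Λ * Wᵀ)
    (hd : ∀ i, d i ∈ Set.Icc a b)
    (rhs xstar : Fin n → ℝ) (hfix : xstar = A.mulVec xstar + rhs)
    (x : ℕ → Fin n → ℝ)
    (hx : ∀ j < k, x (j + 1) = A.mulVec (x j) + rhs)
    (f : ℕ → Fin n → ℝ)
    (hf : ∀ j, f j = A.mulVec (x j) + rhs - x j)
    (Dk Xk : Matrix (Fin n) (Fin m) ℝ)
    (hDk : Dk = Matrix.of fun i (l : Fin m) => f (k - m + l + 1) i - f (k - m + l) i)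
    (hXk : Xk = Matrix.of fun i (l : Fin m) => x (k - m + l + 1) i - x (k - m + l) i)
    (hDkinv : IsUnit (Dkᵀ * Dk).det)
    (Sk : Matrix (Fin n) (Fin n) ℝ)
    (hSk : Sk = (Dk + Xk) * (Dkᵀ * Dk)⁻¹ * Dkᵀ)
    (hxk1 : x (k + 1) = x k + (1 - Sk).mulVec (f k))
    (Dμ : Matrix (Fin n) (Fin n) ℝ)
    (hDμ : Dμ = Λ * (Λ - 1)⁻¹) :
    enorm2 (Dμ⁻¹.mulVec (Wᵀ.mulVec (x (k + 1) - xstar))) ≤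
      |(Polynomial.Chebyshev.T ℝ m).eval ((2 * a * b - a - b) / (b - a))|⁻¹ *
        enorm2 (Dμ⁻¹.mulVec (Wᵀ.mulVec (A.mulVec (x k - xstar)))) := by
  classical
  -- sign facts
  have h0' : 0 < a ∨ b < 0 := by
    by_contra h
    push_neg at h
    exact h0 ⟨h.1, h.2⟩
  have h1' : 1 < a ∨ b < 1 := by
    by_contra h
    push_neg at h
    exact h1 ⟨h.1, h.2⟩
  have hdne : ∀ i, d i ≠ 0 := by
    intro i
    rcases h0' with h | h
    · exact ne_of_gt (lt_of_lt_of_le h (hd i).1)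
    · exact ne_of_lt (lt_of_le_of_lt (hd i).2 h)
  have hd1 : ∀ i, d i ≠ 1 := by
    intro i
    rcases h1' with h | h
    · exact ne_of_gt (lt_of_lt_of_le h (hd i).1)
    · exact ne_of_lt (lt_of_le_of_lt (hd i).2 h)
  -- diagonal computations for Dμ
  have hΛ1 : Λ - 1 = Matrix.diagonal (fun i => d i - 1) := by
    rw [hΛ, ← Matrix.diagonal_one, Matrix.diagonal_sub]
  have hinv1 : (Λ - 1)⁻¹ = Matrix.diagonal (fun i => (d i - 1)⁻¹) := by
    apply Matrix.inv_eq_right_inv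
    have hfun : (fun i => (d i - 1) * (d i - 1)⁻¹) = fun _ => (1 : ℝ) := by
      funext i
      field_simp [sub_ne_zero.mpr (hd1 i)]
    rw [hΛ1, Matrix.diagonal_mul_diagonal, hfun, Matrix.diagonal_one]
  have hDμ2 : Dμ = Matrix.diagonal (fun i => d i * (d i - 1)⁻¹) := by
    rw [hDμ, hinv1, hΛ, Matrix.diagonal_mul_diagonal]
  have hDμinv : Dμ⁻¹ = Matrix.diagonal (fun i => (d i - 1) * (d i)⁻¹) := by
    apply Matrix.inv_eq_right_inv
    have hfun : (fun i => d i * (d i - 1)⁻¹ * ((d i - 1) * (d i)⁻¹)) = fun _ => (1 : ℝ) := by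
      funext i
      field_simp [hdne i, sub_ne_zero.mpr (hd1 i)]
    rw [hDμ2, Matrix.diagonal_mul_diagonal, hfun, Matrix.diagonal_one]
  -- error vectors
  set e : ℕ → Fin n → ℝ := fun j => x j - xstar with he
  have hAstar : A *ᵥ xstar = xstar - rhs := by
    nth_rewrite 2 [hfix]
    abel
  have hfe : ∀ j, f j = A *ᵥ (e j) - e j := by
    intro j
    rw [hf j, he]
    simp only [Matrix.mulVec_sub, hAstar]
    abel
  have hestep : ∀ j, j < k → e (j + 1) = A *ᵥ (e j) := by
    intro j hj
    show x (j + 1) - xstar = _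
    rw [hx j hj, Matrix.mulVec_sub, hAstar]
    abel
  have hepow : ∀ l, l ≤ m → e (k - m + l) = (A ^ l) *ᵥ (e (k - m)) := by
    intro l hl
    induction l with
    | zero => simp [Matrix.one_mulVec]
    | succ p ih =>
      have hp : p ≤ m := Nat.le_of_succ_le hl
      have hlt : k - m + p < k := by omega
      have : k - m + (p + 1) = (k - m + p) + 1 := by omega
      rw [this, hestep _ hlt, ih hp, Matrix.mulVec_mulVec, ← pow_succ']
  -- eigen-coordinates
  set y : Fin n → ℝ := Wᵀ *ᵥ (e (k - m)) with hy
  have hWA : ∀ v : Fin n → ℝ, Wᵀ *ᵥ (A *ᵥ v) = fun i => d i * (Wᵀ *ᵥ v) i := by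
    intro v
    rw [Matrix.mulVec_mulVec, hA, hΛ]
    have : Wᵀ * (W * Matrix.diagonal d * Wᵀ) = Matrix.diagonal d * Wᵀ := by
      rw [← Matrix.mul_assoc, ← Matrix.mul_assoc, hW1, Matrix.one_mul]
    rw [this, ← Matrix.mulVec_mulVec]
    funext i
    rw [Matrix.mulVec_diagonal]
  have hWe : ∀ l, l ≤ m → Wᵀ *ᵥ (e (k - m + l)) = fun i => d i ^ l * y i := by
    intro l hl
    induction l with
    | zero => simp [hy]
    | succ p ih =>
      have hp : p ≤ m := Nat.le_of_succ_le hl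
      have hlt : k - m + p < k := by omega
      have h1 : k - m + (p + 1) = (k - m + p) + 1 := by omega
      rw [h1, hestep _ hlt, hWA, ih hp]
      funext i
      simp only
      ring
  have hWf : ∀ l, l ≤ m → Wᵀ *ᵥ (f (k - m + l)) = fun i => (d i - 1) * d i ^ l * y i := by
    intro l hl
    rw [hfe, Matrix.mulVec_sub, hWA, hWe l hl]
    funext i
    simp only [Pi.sub_apply]
    ring
  have hkm : k - m + m = k := by omega
  -- matrix products in eigen-coordinates
  have hmulVec_apply : ∀ {p q : ℕ} (M : Matrix (Fin p) (Fin q) ℝ) (v : Fin q → ℝ) (i : Fin p),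
      (M *ᵥ v) i = ∑ j, M i j * v j := fun _ _ _ => rfl
  have hWDk : ∀ (c : Fin m → ℝ) (i : Fin n), (Wᵀ *ᵥ (Dk *ᵥ c)) i
      = ∑ l : Fin m, c l * ((d i - 1) * (d i ^ ((l : ℕ) + 1) - d i ^ (l : ℕ)) * y i) := by
    intro c i
    rw [Matrix.mulVec_mulVec, hmulVec_apply]
    apply Finset.sum_congr rfl
    intro l _
    have hl1 : (l : ℕ) + 1 ≤ m := l.2
    have hl : (l : ℕ) ≤ m := le_of_lt l.2
    have hentry : (Wᵀ * Dk) i l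
        = (Wᵀ *ᵥ f (k - m + ((l : ℕ) + 1))) i - (Wᵀ *ᵥ f (k - m + (l : ℕ))) i := by
      rw [Matrix.mul_apply, hmulVec_apply, hmulVec_apply, ← Finset.sum_sub_distrib]
      apply Finset.sum_congr rfl
      intro j _
      rw [hDk]
      have : k - m + ((l : ℕ) + 1) = k - m + (l : ℕ) + 1 := by omega
      rw [this]
      simp only [Matrix.of_apply]
      ring
    rw [hentry, hWf _ hl1, hWf _ hl]
    simp only
    ring
  have hWXk : ∀ (c : Fin m → ℝ) (i : Fin n), (Wᵀ *ᵥ (Xk *ᵥ c)) i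
      = ∑ l : Fin m, c l * ((d i ^ ((l : ℕ) + 1) - d i ^ (l : ℕ)) * y i) := by
    intro c i
    rw [Matrix.mulVec_mulVec, hmulVec_apply]
    apply Finset.sum_congr rfl
    intro l _
    have hl1 : (l : ℕ) + 1 ≤ m := l.2
    have hl : (l : ℕ) ≤ m := le_of_lt l.2
    have hentry : (Wᵀ * Xk) i l
        = (Wᵀ *ᵥ e (k - m + ((l : ℕ) + 1))) i - (Wᵀ *ᵥ e (k - m + (l : ℕ))) i := by
      rw [Matrix.mul_apply, hmulVec_apply, hmulVec_apply, ← Finset.sum_sub_distrib]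
      apply Finset.sum_congr rfl
      intro j _
      rw [hXk]
      have h2 : k - m + ((l : ℕ) + 1) = k - m + (l : ℕ) + 1 := by omega
      rw [h2]
      simp only [Matrix.of_apply]
      show Wᵀ i j * (x (k - m + (l:ℕ) + 1) j - x (k - m + (l:ℕ)) j)
          = Wᵀ i j * e (k - m + (l:ℕ) + 1) j - Wᵀ i j * e (k - m + (l:ℕ)) j
      simp only [he, Pi.sub_apply]
      ring
    rw [hentry, hWe _ hl1, hWe _ hl]
    simp only
    ring
  -- residual in eigen-coordinates
  have hres : ∀ (c : Fin m → ℝ) (i : Fin n), (Wᵀ *ᵥ (f k - Dk *ᵥ c)) i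
      = (d i - 1) * (d i ^ m - ∑ l : Fin m, c l * (d i ^ ((l : ℕ) + 1) - d i ^ (l : ℕ))) * y i := by
    intro c i
    rw [Matrix.mulVec_sub]
    simp only [Pi.sub_apply]
    have hfk : Wᵀ *ᵥ f k = fun i => (d i - 1) * d i ^ m * y i := by
      rw [← hkm]; exact hWf m le_rfl
    rw [hfk, hWDk]
    simp only
    have hsum : ∑ l : Fin m, c l * ((d i - 1) * (d i ^ ((l : ℕ) + 1) - d i ^ (l : ℕ)) * y i)
        = (∑ l : Fin m, c l * (d i ^ ((l : ℕ) + 1) - d i ^ (l : ℕ))) * ((d i - 1) * y i) := by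
      rw [Finset.sum_mul]
      exact Finset.sum_congr rfl fun l _ => by ring
    rw [hsum]
    ring
  -- gamma and the AA step
  set γ : Fin m → ℝ := ((Dkᵀ * Dk)⁻¹ * Dkᵀ) *ᵥ (f k) with hγ
  have hek1 : e (k + 1) = e k + f k - (Dk + Xk) *ᵥ γ := by
    show x (k + 1) - xstar = _
    rw [hxk1, Matrix.sub_mulVec, Matrix.one_mulVec, hSk, Matrix.mul_assoc,
      ← Matrix.mulVec_mulVec]
    rw [← hγ, he]
    simp only
    abel
  -- key identity 1 : LHS vector
  have hkey1 : Dμ⁻¹ *ᵥ (Wᵀ *ᵥ (x (k + 1) - xstar)) = Wᵀ *ᵥ (f k - Dk *ᵥ γ) := by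
    funext i
    have hxediff : x (k + 1) - xstar = e (k + 1) := rfl
    rw [hxediff, hek1, hDμinv]
    rw [Matrix.mulVec_diagonal]
    have hWek : Wᵀ *ᵥ e k = fun i => d i ^ m * y i := by
      rw [← hkm]; exact hWe m le_rfl
    have hexp : (Wᵀ *ᵥ (e k + f k - (Dk + Xk) *ᵥ γ)) i
        = d i ^ m * y i + (d i - 1) * d i ^ m * y i
          - (∑ l : Fin m, γ l * ((d i - 1) * (d i ^ ((l : ℕ) + 1) - d i ^ (l : ℕ)) * y i)
            + ∑ l : Fin m, γ l * ((d i ^ ((l : ℕ) + 1) - d i ^ (l : ℕ)) * y i)) := by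
      rw [show e k + f k - (Dk + Xk) *ᵥ γ = (e k + f k) - (Dk *ᵥ γ + Xk *ᵥ γ) by
        rw [Matrix.add_mulVec]]
      rw [Matrix.mulVec_sub, Matrix.mulVec_add, Matrix.mulVec_add]
      simp only [Pi.sub_apply, Pi.add_apply]
      rw [hWek, hWDk, hWXk]
      have hWfk : Wᵀ *ᵥ f k = fun i => (d i - 1) * d i ^ m * y i := by
        rw [← hkm]; exact hWf m le_rfl
      rw [hWfk]
    rw [hexp, hres γ i]
    set S : ℝ := ∑ l : Fin m, γ l * (d i ^ ((l : ℕ) + 1) - d i ^ (l : ℕ)) with hS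
    have hS1 : ∑ l : Fin m, γ l * ((d i - 1) * (d i ^ ((l : ℕ) + 1) - d i ^ (l : ℕ)) * y i)
        = (d i - 1) * S * y i := by
      rw [hS, Finset.mul_sum, Finset.sum_mul]
      exact Finset.sum_congr rfl fun l _ => by ring
    have hS2 : ∑ l : Fin m, γ l * ((d i ^ ((l : ℕ) + 1) - d i ^ (l : ℕ)) * y i) = S * y i := by
      rw [hS, Finset.sum_mul]
      exact Finset.sum_congr rfl fun l _ => by ring
    rw [hS1, hS2]
    have hdi : d i ≠ 0 := hdne i
    field_simp
    ring
  -- key identity 2 : RHS vector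
  have hkey2 : Dμ⁻¹ *ᵥ (Wᵀ *ᵥ (A *ᵥ (x k - xstar))) = fun i => (d i - 1) * d i ^ m * y i := by
    funext i
    have hxk : x k - xstar = e k := rfl
    rw [hxk, hDμinv, Matrix.mulVec_diagonal, hWA]
    have hWek : Wᵀ *ᵥ e k = fun i => d i ^ m * y i := by
      rw [← hkm]; exact hWe m le_rfl
    rw [hWek]
    have hdi : d i ≠ 0 := hdne i
    field_simp
  -- orthogonal invariance of the sum of squares
  have horth : ∀ v : Fin n → ℝ, ∑ i, (Wᵀ *ᵥ v) i ^ 2 = ∑ i, v i ^ 2 := by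
    intro v
    have h1 : ∑ i, (Wᵀ *ᵥ v) i ^ 2 = (Wᵀ *ᵥ v) ⬝ᵥ (Wᵀ *ᵥ v) := by
      simp [dotProduct, pow_two]
    have h2 : (Wᵀ *ᵥ v) ⬝ᵥ (Wᵀ *ᵥ v) = v ⬝ᵥ v := by
      rw [Matrix.dotProduct_mulVec, Matrix.vecMul_transpose, Matrix.mulVec_mulVec, hW2,
        Matrix.one_mulVec]
    rw [h1, h2]
    simp [dotProduct, pow_two]
  -- least squares optimality
  have horthres : Dkᵀ *ᵥ (f k - Dk *ᵥ γ) = 0 := by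
    rw [Matrix.mulVec_sub, hγ, Matrix.mulVec_mulVec, Matrix.mulVec_mulVec,
      ← Matrix.mul_assoc, Matrix.mul_nonsing_inv _ hDkinv, Matrix.one_mul, sub_self]
  have hls : ∀ c : Fin m → ℝ,
      ∑ i, (f k - Dk *ᵥ γ) i ^ 2 ≤ ∑ i, (f k - Dk *ᵥ c) i ^ 2 := by
    intro c
    set r : Fin n → ℝ := f k - Dk *ᵥ γ with hr
    set w : Fin m → ℝ := γ - c with hw
    have hdecomp : f k - Dk *ᵥ c = r + Dk *ᵥ w := by
      rw [hr, hw, Matrix.mulVec_sub]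
      abel
    have hdot : r ⬝ᵥ (Dk *ᵥ w) = 0 := by
      rw [Matrix.dotProduct_mulVec, ← Matrix.mulVec_transpose, horthres]
      simp [dotProduct]
    have hexpand : ∑ i, (r + Dk *ᵥ w) i ^ 2
        = ∑ i, r i ^ 2 + 2 * (r ⬝ᵥ (Dk *ᵥ w)) + ∑ i, (Dk *ᵥ w) i ^ 2 := by
      simp only [Pi.add_apply, dotProduct, Finset.mul_sum]
      rw [← Finset.sum_add_distrib, ← Finset.sum_add_distrib]
      apply Finset.sum_congr rfl
      intro i _
      ring
    rw [hdecomp, hexpand, hdot]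
    have : (0:ℝ) ≤ ∑ i, (Dk *ᵥ w) i ^ 2 := Finset.sum_nonneg fun i _ => sq_nonneg _
    linarith
  -- Chebyshev polynomial coefficients
  obtain ⟨c, hc⟩ := cheb_key hm hab h0' h1'
  set C0 : ℝ := |(Polynomial.Chebyshev.T ℝ m).eval ((2 * a * b - a - b) / (b - a))|⁻¹ with hC0
  have hC0nn : 0 ≤ C0 := by positivity
  -- pointwise bound for the Chebyshev choice
  have hpt : ∀ i, (Wᵀ *ᵥ (f k - Dk *ᵥ c)) i ^ 2 ≤ C0 ^ 2 * ((d i - 1) * d i ^ m * y i) ^ 2 := by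
    intro i
    rw [hres c i]
    have hb1 := hc (d i) (hd i)
    have habs : |(d i - 1) * (d i ^ m - ∑ l : Fin m, c l * (d i ^ ((l : ℕ) + 1) - d i ^ (l : ℕ))) * y i|
        ≤ C0 * |(d i - 1) * d i ^ m * y i| := by
      rw [abs_mul, abs_mul, abs_mul, abs_mul]
      calc |d i - 1| * |d i ^ m - ∑ l : Fin m, c l * (d i ^ ((l : ℕ) + 1) - d i ^ (l : ℕ))| * |y i|
          ≤ |d i - 1| * (C0 * |d i ^ m|) * |y i| := by
            apply mul_le_mul_of_nonneg_right _ (abs_nonneg _)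
            exact mul_le_mul_of_nonneg_left hb1 (abs_nonneg _)
        _ = C0 * (|d i - 1| * |d i ^ m| * |y i|) := by ring
      
    calc ((d i - 1) * (d i ^ m - ∑ l : Fin m, c l * (d i ^ ((l : ℕ) + 1) - d i ^ (l : ℕ))) * y i) ^ 2
        = |(d i - 1) * (d i ^ m - ∑ l : Fin m, c l * (d i ^ ((l : ℕ) + 1) - d i ^ (l : ℕ))) * y i| ^ 2 := (sq_abs _).symm
      _ ≤ (C0 * |(d i - 1) * d i ^ m * y i|) ^ 2 := by
          apply pow_le_pow_left₀ (abs_nonneg _) habs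
      _ = C0 ^ 2 * ((d i - 1) * d i ^ m * y i) ^ 2 := by
          rw [mul_pow, sq_abs]
  -- assemble
  rw [hkey1, hkey2]
  show enorm2 (Wᵀ *ᵥ (f k - Dk *ᵥ γ)) ≤ C0 * enorm2 (fun i => (d i - 1) * d i ^ m * y i)
  unfold enorm2
  rw [horth]
  have step1 : ∑ i, (f k - Dk *ᵥ γ) i ^ 2 ≤ C0 ^ 2 * ∑ i, ((d i - 1) * d i ^ m * y i) ^ 2 := by
    calc ∑ i, (f k - Dk *ᵥ γ) i ^ 2 ≤ ∑ i, (f k - Dk *ᵥ c) i ^ 2 := hls c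
      _ = ∑ i, (Wᵀ *ᵥ (f k - Dk *ᵥ c)) i ^ 2 := (horth _).symm
      _ ≤ ∑ i, C0 ^ 2 * ((d i - 1) * d i ^ m * y i) ^ 2 := Finset.sum_le_sum fun i _ => hpt i
      _ = C0 ^ 2 * ∑ i, ((d i - 1) * d i ^ m * y i) ^ 2 := (Finset.mul_sum _ _ _).symm
  calc Real.sqrt (∑ i, (f k - Dk *ᵥ γ) i ^ 2)
      ≤ Real.sqrt (C0 ^ 2 * ∑ i, ((d i - 1) * d i ^ m * y i) ^ 2) := Real.sqrt_le_sqrt step1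
    _ = C0 * Real.sqrt (∑ i, ((d i - 1) * d i ^ m * y i) ^ 2) := by
        rw [Real.sqrt_mul (sq_nonneg _), Real.sqrt_sq hC0nn]
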